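/- Let d ≥ 1 be an integer and let ζ > 0, μ > 0, L > 0. Let W ∈ ℝ^{d×d} be symmetric positive definite, let c_1, …, c_m ∈ ℝ^d and ρ_1, …, ρ_m ≥ 0 with Σ_{i=1}^m ρ_i = 1, and set G = W^{-1}(Σ_{i=1}^m ρ_i c_i c_iᵀ)W^{-1}. Let u ∈ ℝ^d, set v = W u, let b ∈ ℝ with |b| ≤ L, and define F = b · (v vᵀ)/‖v‖² if ‖v‖ ≥ μ and F = 0 otherwise. Then for all z, y ∈ ℝ^d with ‖z‖ ≤ 1 and ‖y‖ ≤ 1: √ζ · μ · |(Proj_{S(G,ζ)} z)ᵀ F y| ≤ L · max_{1 ≤ i ≤ m} |⟨u, c_i⟩|. -/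

import Mathlib

open Matrix

/-- `spectralSubspace A c` is the linear subspace of `ℝ^d` spanned by the eigenvectors of
`A` whose eigenvalues are at least `c`. -/
def spectralSubspace {d : ℕ} (A : Matrix (Fin d) (Fin d) ℝ) (c : ℝ) :
    Submodule ℝ (Fin d → ℝ) :=
  Submodule.span ℝ {v : Fin d → ℝ | ∃ μ : ℝ, c ≤ μ ∧ A *ᵥ v = μ • v}

/-- `IsOrthProjOnto P S` says that the matrix `P` is the orthogonal projection onto the
subspace `S`: every `P x` lies in `S` and `x - P x` is orthogonal to `S`. -/
def IsOrthProjOnto {d : ℕ} (P : Matrix (Fin d) (Fin d) ℝ)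
    (S : Submodule ℝ (Fin d → ℝ)) : Prop :=
  (∀ x, P *ᵥ x ∈ S) ∧ ∀ x, ∀ s ∈ S, (x - P *ᵥ x) ⬝ᵥ s = 0

section Aux

variable {d : ℕ}

lemma aux_dot_nonneg (x : Fin d → ℝ) : 0 ≤ x ⬝ᵥ x :=
  Finset.sum_nonneg fun _ _ => mul_self_nonneg _

lemma aux_dot_cs (x y : Fin d → ℝ) : |x ⬝ᵥ y| ≤ Real.sqrt (x ⬝ᵥ x) * Real.sqrt (y ⬝ᵥ y) := by
  have h : x ⬝ᵥ y ≤ Real.sqrt (x ⬝ᵥ x) * Real.sqrt (y ⬝ᵥ y) := by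
    have := Real.sum_mul_le_sqrt_mul_sqrt Finset.univ x y
    simpa [dotProduct, sq] using this
  have h2 : -(x ⬝ᵥ y) ≤ Real.sqrt (x ⬝ᵥ x) * Real.sqrt (y ⬝ᵥ y) := by
    have := Real.sum_mul_le_sqrt_mul_sqrt Finset.univ (-x) y
    simpa [dotProduct, sq, neg_dotProduct] using this
  exact abs_le.2 ⟨by linarith, h⟩

lemma aux_weighted_cs {m : ℕ} (ρ α β : Fin m → ℝ) (hρ : ∀ i, 0 ≤ ρ i) :
    |∑ i, ρ i * (α i * β i)| ≤
      Real.sqrt (∑ i, ρ i * α i ^ 2) * Real.sqrt (∑ i, ρ i * β i ^ 2) := by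
  have key : ∀ i : Fin m, |ρ i * (α i * β i)| =
      (Real.sqrt (ρ i) * |α i|) * (Real.sqrt (ρ i) * |β i|) := by
    intro i
    have : Real.sqrt (ρ i) * Real.sqrt (ρ i) = ρ i := Real.mul_self_sqrt (hρ i)
    rw [abs_mul, abs_mul, abs_of_nonneg (hρ i)]
    calc ρ i * (|α i| * |β i|)
        = (Real.sqrt (ρ i) * Real.sqrt (ρ i)) * (|α i| * |β i|) := by rw [this]
      _ = (Real.sqrt (ρ i) * |α i|) * (Real.sqrt (ρ i) * |β i|) := by ring
  calc |∑ i, ρ i * (α i * β i)| ≤ ∑ i, |ρ i * (α i * β i)| :=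
        Finset.abs_sum_le_sum_abs _ _
    _ = ∑ i, (Real.sqrt (ρ i) * |α i|) * (Real.sqrt (ρ i) * |β i|) :=
        Finset.sum_congr rfl fun i _ => key i
    _ ≤ Real.sqrt (∑ i, (Real.sqrt (ρ i) * |α i|) ^ 2) *
        Real.sqrt (∑ i, (Real.sqrt (ρ i) * |β i|) ^ 2) :=
        Real.sum_mul_le_sqrt_mul_sqrt _ _ _
    _ = Real.sqrt (∑ i, ρ i * α i ^ 2) * Real.sqrt (∑ i, ρ i * β i ^ 2) := by
        congr 1 <;> · congr 1; refine Finset.sum_congr rfl fun i _ => ?_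
                      rw [mul_pow, Real.sq_sqrt (hρ i), sq_abs]

lemma aux_mulVec_finset_sum {ι : Type*} (A : Matrix (Fin d) (Fin d) ℝ) (s : Finset ι)
    (f : ι → (Fin d → ℝ)) : A *ᵥ (∑ i ∈ s, f i) = ∑ i ∈ s, A *ᵥ f i := by
  ext j
  simp only [mulVec, dotProduct, Finset.sum_apply, Finset.mul_sum]
  rw [Finset.sum_comm]

lemma aux_sum_mulVec {ι : Type*} (s : Finset ι) (A : ι → Matrix (Fin d) (Fin d) ℝ)
    (x : Fin d → ℝ) : (∑ i ∈ s, A i) *ᵥ x = ∑ i ∈ s, (A i) *ᵥ x := by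
  ext j
  simp only [mulVec, dotProduct, Finset.sum_apply, Matrix.sum_apply, Finset.sum_mul]
  rw [Finset.sum_comm]

lemma aux_dot_finset_sum_left {ι : Type*} (s : Finset ι) (f : ι → (Fin d → ℝ))
    (w : Fin d → ℝ) : (∑ i ∈ s, f i) ⬝ᵥ w = ∑ i ∈ s, f i ⬝ᵥ w := by
  simp only [dotProduct, Finset.sum_apply, Finset.sum_mul]
  rw [Finset.sum_comm]

lemma aux_dot_finset_sum_right {ι : Type*} (s : Finset ι) (f : ι → (Fin d → ℝ))
    (w : Fin d → ℝ) : w ⬝ᵥ (∑ i ∈ s, f i) = ∑ i ∈ s, w ⬝ᵥ f i := by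
  simp only [dotProduct, Finset.sum_apply, Finset.mul_sum]
  rw [Finset.sum_comm]

lemma aux_vecMulVec_mulVec (w v x : Fin d → ℝ) : vecMulVec w v *ᵥ x = (v ⬝ᵥ x) • w := by
  ext i
  simp only [vecMulVec_apply, mulVec, dotProduct, Pi.smul_apply, smul_eq_mul]
  rw [Finset.sum_mul]
  exact Finset.sum_congr rfl fun k _ => by ring

lemma aux_symm_swap {A : Matrix (Fin d) (Fin d) ℝ} (hA : Aᵀ = A) (x w : Fin d → ℝ) :
    x ⬝ᵥ (A *ᵥ w) = (A *ᵥ x) ⬝ᵥ w := by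
  rw [dotProduct_mulVec, ← mulVec_transpose, hA]

end Aux

theorem dual_admissibility {d m : ℕ} (hd : 1 ≤ d) (hm : 1 ≤ m)
    (ζ μ L : ℝ) (hζ : 0 < ζ) (hμ : 0 < μ) (hL : 0 < L)
    (W : Matrix (Fin d) (Fin d) ℝ) (hW : W.PosDef)
    (c : Fin m → Fin d → ℝ) (ρ : Fin m → ℝ)
    (hρ : ∀ i, 0 ≤ ρ i) (hρsum : ∑ i, ρ i = 1)
    (G : Matrix (Fin d) (Fin d) ℝ)
    (hG : G = W⁻¹ * (∑ i, ρ i • vecMulVec (c i) (c i)) * W⁻¹)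
    (u v : Fin d → ℝ) (hv : v = W *ᵥ u)
    (b : ℝ) (hb : |b| ≤ L)
    (F : Matrix (Fin d) (Fin d) ℝ)
    (hF : F = if μ ≤ Real.sqrt (v ⬝ᵥ v)
      then (b * (v ⬝ᵥ v)⁻¹) • vecMulVec v v else 0)
    (Pr : Matrix (Fin d) (Fin d) ℝ) (hPr : IsOrthProjOnto Pr (spectralSubspace G ζ))
    (z y : Fin d → ℝ) (hz : Real.sqrt (z ⬝ᵥ z) ≤ 1) (hy : Real.sqrt (y ⬝ᵥ y) ≤ 1) :
    Real.sqrt ζ * μ * |(Pr *ᵥ z) ⬝ᵥ (F *ᵥ y)| ≤ L * ⨆ i, |u ⬝ᵥ c i| := by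
  have hKbdd : ∀ i : Fin m, |u ⬝ᵥ c i| ≤ ⨆ j, |u ⬝ᵥ c j| :=
    fun i => le_ciSup (f := fun j => |u ⬝ᵥ c j|) (Set.Finite.bddAbove (Set.finite_range _)) i
  set K := ⨆ j, |u ⬝ᵥ c j| with hKdef
  have hK0 : 0 ≤ K := le_trans (abs_nonneg _) (hKbdd ⟨0, hm⟩)
  by_cases hcase : μ ≤ Real.sqrt (v ⬝ᵥ v)
  swap
  · rw [hF, if_neg hcase]
    simp only [Matrix.zero_mulVec, dotProduct_zero, abs_zero, mul_zero]
    exact mul_nonneg hL.le hK0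
  -- main case
  have hvv0 : 0 ≤ v ⬝ᵥ v := aux_dot_nonneg v
  have hs : 0 < Real.sqrt (v ⬝ᵥ v) := lt_of_lt_of_le hμ hcase
  set s := Real.sqrt (v ⬝ᵥ v) with hsdef
  have hss : s * s = v ⬝ᵥ v := Real.mul_self_sqrt hvv0
  -- invertibility and symmetry
  have hWinv : W⁻¹ * W = 1 := nonsing_inv_mul W hW.det_pos.ne'.isUnit
  have hWu : W⁻¹ *ᵥ v = u := by rw [hv, mulVec_mulVec, hWinv, one_mulVec]
  have hWT : Wᵀ = W := by
    have := hW.1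
    rwa [Matrix.IsHermitian, conjTranspose_eq_transpose_of_trivial] at this
  have hWinvT : (W⁻¹)ᵀ = W⁻¹ := by rw [transpose_nonsing_inv, hWT]
  set M := ∑ i, ρ i • vecMulVec (c i) (c i) with hMdef
  have hMT : Mᵀ = M := by
    rw [hMdef]
    ext i j
    simp only [transpose_apply, Matrix.sum_apply, Matrix.smul_apply, vecMulVec_apply,
      smul_eq_mul]
    exact Finset.sum_congr rfl fun k _ => by ring
  have hGT : Gᵀ = G := by
    rw [hG, transpose_mul, transpose_mul, hWinvT, hMT, mul_assoc]
  have hGh : G.IsHermitian := by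
    rw [Matrix.IsHermitian, conjTranspose_eq_transpose_of_trivial]
    exact hGT
  -- quadratic form formula
  have hMv : ∀ w : Fin d → ℝ, M *ᵥ w = ∑ i, (ρ i * (c i ⬝ᵥ w)) • c i := by
    intro w
    rw [hMdef, aux_sum_mulVec]
    refine Finset.sum_congr rfl fun i _ => ?_
    rw [smul_mulVec, aux_vecMulVec_mulVec, smul_smul, mul_comm]
  have quad : ∀ x w : Fin d → ℝ,
      x ⬝ᵥ (G *ᵥ w) = ∑ i, ρ i * ((c i ⬝ᵥ (W⁻¹ *ᵥ x)) * (c i ⬝ᵥ (W⁻¹ *ᵥ w))) := by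
    intro x w
    rw [hG, ← mulVec_mulVec, ← mulVec_mulVec, aux_symm_swap hWinvT, hMv,
      aux_dot_finset_sum_right]
    refine Finset.sum_congr rfl fun i _ => ?_
    rw [dotProduct_smul, smul_eq_mul, dotProduct_comm (W⁻¹ *ᵥ x) (c i)]
    ring
  -- eigen decomposition
  have hinner : ∀ x w : Fin d → ℝ, (@inner ℝ (EuclideanSpace ℝ (Fin d)) _ (WithLp.toLp 2 x) (WithLp.toLp 2 w)) = x ⬝ᵥ w := by
    intro x w; simp [PiLp.inner_apply, dotProduct, mul_comm]
  set lam := hGh.eigenvalues with hlamdef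
  set e : Fin d → (Fin d → ℝ) := fun j => ⇑(hGh.eigenvectorBasis j) with hedef
  have heig : ∀ j, G *ᵥ e j = lam j • e j := fun j => hGh.mulVec_eigenvectorBasis j
  have horm : ∀ j k, e j ⬝ᵥ e k = if j = k then 1 else 0 := by
    intro j k
    rw [← hinner]
    exact orthonormal_iff_ite.1 hGh.eigenvectorBasis.orthonormal j k
  have hexp : ∀ x : Fin d → ℝ, ∑ j, (e j ⬝ᵥ x) • e j = x := by
    intro x
    have h := hGh.eigenvectorBasis.sum_repr' (WithLp.toLp 2 x)
    calc ∑ j, (e j ⬝ᵥ x) • e j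
        = ∑ j, (@inner ℝ (EuclideanSpace ℝ (Fin d)) _ (hGh.eigenvectorBasis j) (WithLp.toLp 2 x)) •
            (hGh.eigenvectorBasis j : Fin d → ℝ) := Finset.sum_congr rfl fun j _ => by rw [← hinner]
      _ = x := by simpa using congrArg WithLp.ofLp h
  -- coefficients of span elements vanish on small eigenvalues
  have hzero : ∀ j, lam j < ζ → ∀ x ∈ spectralSubspace G ζ, e j ⬝ᵥ x = 0 := by
    intro j hj x hx
    refine Submodule.span_induction ?_ ?_ ?_ ?_ hx
    · rintro w ⟨ν, hν, hw⟩
      have h1 : e j ⬝ᵥ (G *ᵥ w) = lam j * (e j ⬝ᵥ w) := by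
        rw [aux_symm_swap hGT, heig j, smul_dotProduct, smul_eq_mul]
      have h2 : e j ⬝ᵥ (G *ᵥ w) = ν * (e j ⬝ᵥ w) := by
        rw [hw, dotProduct_smul, smul_eq_mul]
      have h3 : (lam j - ν) * (e j ⬝ᵥ w) = 0 := by rw [sub_mul]; linarith
      have hne : lam j - ν ≠ 0 := by
        have : lam j < ν := lt_of_lt_of_le hj hν
        linarith
      exact (mul_eq_zero.1 h3).resolve_left hne
    · simp
    · intro a b' _ _ ha hb'
      rw [dotProduct_add, ha, hb', add_zero]
    · intro r a _ ha
      rw [dotProduct_smul, ha, smul_zero]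
  -- the projected vector
  set p := Pr *ᵥ z with hpdef
  have hpS : p ∈ spectralSubspace G ζ := hPr.1 z
  have hpp1 : p ⬝ᵥ p ≤ 1 := by
    have hzz : z ⬝ᵥ z ≤ 1 := by
      nlinarith [Real.sq_sqrt (aux_dot_nonneg z), Real.sqrt_nonneg (z ⬝ᵥ z)]
    have hporth : (z - p) ⬝ᵥ p = 0 := hPr.2 z p hpS
    have hzz' : z ⬝ᵥ z = (z - p) ⬝ᵥ (z - p) + 2 * ((z - p) ⬝ᵥ p) + p ⬝ᵥ p := by
      have h1 : z ⬝ᵥ z = ((z - p) + p) ⬝ᵥ ((z - p) + p) := by rw [sub_add_cancel]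
      rw [h1, add_dotProduct, dotProduct_add, dotProduct_add,
        dotProduct_comm p (z - p)]
      ring
    nlinarith [aux_dot_nonneg (z - p)]
  -- expansion of p over large eigenvalues
  set J := Finset.univ.filter (fun j => ζ ≤ lam j) with hJdef
  set a : Fin d → ℝ := fun j => e j ⬝ᵥ p with hadef
  have hpJ : p = ∑ j ∈ J, a j • e j := by
    have h := hexp p
    rw [← h]
    symm
    refine Finset.sum_subset (Finset.subset_univ J) ?_
    intro j _ hj
    have hjlt : lam j < ζ := by
      by_contra hge
      exact hj (Finset.mem_filter.2 ⟨Finset.mem_univ j, not_lt.1 hge⟩)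
    rw [hadef]
    simp only []
    rw [hzero j hjlt p hpS, zero_smul]
  have hpair : ∀ (φ ψ : Fin d → ℝ),
      (∑ j ∈ J, φ j • e j) ⬝ᵥ (∑ k ∈ J, ψ k • e k) = ∑ j ∈ J, φ j * ψ j := by
    intro φ ψ
    rw [aux_dot_finset_sum_left]
    refine Finset.sum_congr rfl fun j hj => ?_
    rw [smul_dotProduct, aux_dot_finset_sum_right, smul_eq_mul]
    rw [Finset.sum_eq_single j]
    · rw [dotProduct_smul, horm j j, if_pos rfl, smul_eq_mul, mul_one]
    · intro k _ hkj
      rw [dotProduct_smul, horm j k, if_neg (fun h => hkj h.symm)]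
      simp
    · intro h; exact absurd hj h
  have hlampos : ∀ j ∈ J, 0 < lam j := fun j hj =>
    lt_of_lt_of_le hζ (Finset.mem_filter.1 hj).2
  set q := ∑ j ∈ J, ((lam j)⁻¹ * a j) • e j with hqdef
  have hGq : G *ᵥ q = p := by
    rw [hqdef, aux_mulVec_finset_sum, hpJ]
    refine Finset.sum_congr rfl fun j hj => ?_
    rw [mulVec_smul, heig j, smul_smul]
    congr 1
    field_simp [(hlampos j hj).ne']
  have hqp : q ⬝ᵥ p = ∑ j ∈ J, (lam j)⁻¹ * a j ^ 2 := by
    rw [hqdef, hpJ, hpair]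
    exact Finset.sum_congr rfl fun j _ => by ring
  have hppJ : p ⬝ᵥ p = ∑ j ∈ J, a j ^ 2 := by
    rw [hpJ, hpair]
    exact Finset.sum_congr rfl fun j _ => by ring
  have hqp_le : q ⬝ᵥ p ≤ ζ⁻¹ := by
    have h1 : ∑ j ∈ J, (lam j)⁻¹ * a j ^ 2 ≤ ∑ j ∈ J, ζ⁻¹ * a j ^ 2 := by
      refine Finset.sum_le_sum fun j hj => ?_
      have : (lam j)⁻¹ ≤ ζ⁻¹ :=
        inv_anti₀ hζ (Finset.mem_filter.1 hj).2
      exact mul_le_mul_of_nonneg_right this (sq_nonneg _)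
    have h2 : ∑ j ∈ J, ζ⁻¹ * a j ^ 2 = ζ⁻¹ * (p ⬝ᵥ p) := by
      rw [hppJ, Finset.mul_sum]
    have h3 : ζ⁻¹ * (p ⬝ᵥ p) ≤ ζ⁻¹ * 1 :=
      mul_le_mul_of_nonneg_left hpp1 (inv_nonneg.2 hζ.le)
    rw [hqp]
    calc ∑ j ∈ J, (lam j)⁻¹ * a j ^ 2 ≤ ζ⁻¹ * (p ⬝ᵥ p) := h2 ▸ h1
      _ ≤ ζ⁻¹ := by linarith
  -- bound on |p ⬝ᵥ v|
  have ht : (0:ℝ) < Real.sqrt ζ := Real.sqrt_pos.2 hζ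
  have hpv : |p ⬝ᵥ v| ≤ (Real.sqrt ζ)⁻¹ * K := by
    have h1 : p ⬝ᵥ v = ∑ i, ρ i * ((c i ⬝ᵥ (W⁻¹ *ᵥ q)) * (c i ⬝ᵥ u)) := by
      rw [← hGq, ← aux_symm_swap hGT, quad q v, hWu]
    rw [h1]
    have hcs := aux_weighted_cs ρ (fun i => c i ⬝ᵥ (W⁻¹ *ᵥ q)) (fun i => c i ⬝ᵥ u) hρ
    refine le_trans hcs (mul_le_mul ?_ ?_ (Real.sqrt_nonneg _) ?_)
    · have hA : ∑ i, ρ i * (c i ⬝ᵥ (W⁻¹ *ᵥ q)) ^ 2 = q ⬝ᵥ (G *ᵥ q) := by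
        rw [quad q q]
        exact Finset.sum_congr rfl fun i _ => by ring
      have hA2 : ∑ i, ρ i * (c i ⬝ᵥ (W⁻¹ *ᵥ q)) ^ 2 ≤ ζ⁻¹ := by
        rw [hA, hGq]; exact hqp_le
      calc Real.sqrt (∑ i, ρ i * (c i ⬝ᵥ (W⁻¹ *ᵥ q)) ^ 2)
          ≤ Real.sqrt ζ⁻¹ := Real.sqrt_le_sqrt hA2
        _ = (Real.sqrt ζ)⁻¹ := Real.sqrt_inv ζ
    · have hB : ∑ i, ρ i * (c i ⬝ᵥ u) ^ 2 ≤ K ^ 2 := by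
        calc ∑ i, ρ i * (c i ⬝ᵥ u) ^ 2 ≤ ∑ i, ρ i * K ^ 2 := by
              refine Finset.sum_le_sum fun i _ => mul_le_mul_of_nonneg_left ?_ (hρ i)
              calc (c i ⬝ᵥ u) ^ 2 = |u ⬝ᵥ c i| ^ 2 := by
                    rw [dotProduct_comm, sq_abs]
                _ ≤ K ^ 2 := pow_le_pow_left₀ (abs_nonneg _) (hKbdd i) 2
          _ = K ^ 2 := by rw [← Finset.sum_mul, hρsum, one_mul]
      calc Real.sqrt (∑ i, ρ i * (c i ⬝ᵥ u) ^ 2) ≤ Real.sqrt (K ^ 2) :=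
            Real.sqrt_le_sqrt hB
        _ = K := Real.sqrt_sq hK0
    · exact inv_nonneg.2 ht.le
  -- final assembly
  rw [hF, if_pos hcase]
  have hFy : ((b * (v ⬝ᵥ v)⁻¹) • vecMulVec v v) *ᵥ y = (b * (v ⬝ᵥ v)⁻¹) • ((v ⬝ᵥ y) • v) := by
    rw [smul_mulVec, aux_vecMulVec_mulVec]
  rw [hFy]
  have habs : |p ⬝ᵥ ((b * (v ⬝ᵥ v)⁻¹) • ((v ⬝ᵥ y) • v))| =
      |b| * ((s * s)⁻¹ * (|v ⬝ᵥ y| * |p ⬝ᵥ v|)) := by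
    rw [dotProduct_smul, dotProduct_smul, smul_eq_mul, smul_eq_mul, ← hss]
    have hinvnn : |(s * s)⁻¹| = (s * s)⁻¹ := abs_of_nonneg (by positivity)
    rw [abs_mul, abs_mul, abs_mul, hinvnn]
    ring
  rw [habs]
  have hvy : |v ⬝ᵥ y| ≤ s := by
    calc |v ⬝ᵥ y| ≤ s * Real.sqrt (y ⬝ᵥ y) := aux_dot_cs v y
      _ ≤ s * 1 := mul_le_mul_of_nonneg_left hy hs.le
      _ = s := mul_one s
  have hstep : Real.sqrt ζ * μ * (|b| * ((s * s)⁻¹ * (|v ⬝ᵥ y| * |p ⬝ᵥ v|))) ≤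
      Real.sqrt ζ * s * (L * ((s * s)⁻¹ * (s * ((Real.sqrt ζ)⁻¹ * K)))) := by
    gcongr
  refine hstep.trans (le_of_eq ?_)
  field_simp
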